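/- For any single-qubit unitary U (with phase parameter φ as in U = [[a,b],[-e^{iφ}b*, e^{iφ}a*]]), any real φ₀ and any pure state |ψ⟩: U† A_{φ₀-φ, U|ψ⟩} = A_{φ₀, |ψ⟩} U†, where A_{φ,|ψ⟩} = e^{-iφ} Υ(|ψ⟩)⟨ψ| + e^{iφ} |ψ⟩(Υ(|ψ⟩))† is the ψ-NOT operation. -/

import Mathlib

open Matrix Complex

noncomputable section

/-- The U-NOT (antiunitary) operation `Υ(α|0⟩+β|1⟩) = β*|0⟩ - α*|1⟩`. -/
def unot (v : Fin 2 → ℂ) : Fin 2 → ℂ :=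
  ![(starRingEnd ℂ) (v 1), -(starRingEnd ℂ) (v 0)]

/-- The general single-qubit unitary `U = [[a, b], [-e^{iφ} b*, e^{iφ} a*]]`. -/
def Umat (a b : ℂ) (φ : ℝ) : Matrix (Fin 2) (Fin 2) ℂ :=
  !![a, b;
     -(Complex.exp (φ * Complex.I)) * (starRingEnd ℂ) b,
     Complex.exp (φ * Complex.I) * (starRingEnd ℂ) a]


/-- Outer product `|v⟩⟨w|`. -/
def outer (v w : Fin 2 → ℂ) : Matrix (Fin 2) (Fin 2) ℂ :=
  fun i j => v i * (starRingEnd ℂ) (w j)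

/-- The ψ-NOT operation `A_{φ,|ψ⟩} = e^{-iφ} Υ(|ψ⟩)⟨ψ| + e^{iφ} |ψ⟩(Υ(|ψ⟩))†`. -/
def Amat (φ : ℝ) (ψ : Fin 2 → ℂ) : Matrix (Fin 2) (Fin 2) ℂ :=
  Complex.exp (-(φ * Complex.I)) • outer (unot ψ) ψ +
    Complex.exp (φ * Complex.I) • outer ψ (unot ψ)

set_option maxHeartbeats 2000000 in
/-- for any single-qubit unitary `U` (with phase parameter `φ`),
any real `φ₀` and any pure state `|ψ⟩`:
`U† A_{φ₀-φ, U|ψ⟩} = A_{φ₀, |ψ⟩} U†`. -/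
theorem unitary_conj_psi_not
    (a b : ℂ) (φ φ₀ : ℝ) (hab : ‖a‖ ^ 2 + ‖b‖ ^ 2 = 1)
    (ψ : Fin 2 → ℂ) (hψ : ‖ψ 0‖ ^ 2 + ‖ψ 1‖ ^ 2 = 1) :
    (Umat a b φ)ᴴ * Amat (φ₀ - φ) ((Umat a b φ).mulVec ψ) =
      Amat φ₀ ψ * (Umat a b φ)ᴴ := by
  have hab' : (starRingEnd ℂ) a * a + (starRingEnd ℂ) b * b = 1 := by
    have h1 : Complex.normSq a + Complex.normSq b = 1 := by
      rw [← Complex.sq_norm, ← Complex.sq_norm]; exact hab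
    have h2 : ((Complex.normSq a : ℝ) : ℂ) + ((Complex.normSq b : ℝ) : ℂ) = 1 := by
      exact_mod_cast congrArg (Complex.ofReal) h1
    rw [Complex.normSq_eq_conj_mul_self, Complex.normSq_eq_conj_mul_self] at h2
    exact h2
  have hconj : ∀ t : ℝ, (starRingEnd ℂ) (Complex.exp (↑t * Complex.I))
      = (Complex.exp (↑t * Complex.I))⁻¹ := by
    intro t
    rw [← Complex.exp_conj, ← Complex.exp_neg]
    congr 1
    simp [Complex.conj_I]
  have hsub : Complex.exp ((↑φ₀ - ↑φ) * Complex.I)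
      = Complex.exp (↑φ₀ * Complex.I) / Complex.exp (↑φ * Complex.I) := by
    rw [← Complex.exp_sub]; ring_nf
  have h1 : Complex.exp ((φ:ℂ) * Complex.I) ≠ 0 := Complex.exp_ne_zero _
  have h2 : Complex.exp ((φ₀:ℂ) * Complex.I) ≠ 0 := Complex.exp_ne_zero _
  have hUU : (Umat a b φ)ᴴ * Umat a b φ = 1 := by
    ext i j
    fin_cases i <;> fin_cases j <;>
      simp [Umat, Matrix.mul_apply, Matrix.conjTranspose_apply, Fin.sum_univ_succ,
        hconj, Matrix.one_apply, map_neg] <;>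
      field_simp <;>
      first
        | ring1
        | linear_combination Complex.exp ((φ:ℂ) * Complex.I) * hab'
        | linear_combination hab'
  have hA : Amat (φ₀ - φ) ((Umat a b φ).mulVec ψ)
      = Umat a b φ * Amat φ₀ ψ * (Umat a b φ)ᴴ := by
    ext i j
    fin_cases i <;> fin_cases j <;>
      simp [Umat, Amat, outer, unot, Matrix.mul_apply, Matrix.mulVec, dotProduct,
        Matrix.conjTranspose_apply, Fin.sum_univ_succ, Complex.exp_neg, hconj, hsub,
        map_add, _root_.map_mul, map_neg, Matrix.vecMul, Matrix.smul_apply, Matrix.add_apply,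
        Matrix.vecHead, Matrix.vecTail, smul_eq_mul] <;>
      field_simp [h1, h2] <;>
      (try rw [div_eq_iff (by apply_rules [mul_ne_zero, Complex.exp_ne_zero])]) <;>
      ring1
  rw [hA, ← Matrix.mul_assoc, ← Matrix.mul_assoc, hUU, Matrix.one_mul]
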